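/- Let P ⊂ ℕ× be a multiplicative submonoid and ψ : P → C(𝕋,𝕋) a θ-twisted homomorphism (ψ_{pq}(z) = ψ_p(z)ψ_q(z^p)). If there exists n ∈ P with n ≥ 2 such that ψ_n is a constant function, then ψ_p is constant for every p ∈ P. -/

import Mathlib

lemma circle_exp_pow (t : ℝ) (m : ℕ) : (Circle.exp t) ^ m = Circle.exp (m * t) := by
  induction m with
  | zero => simp [Circle.exp_zero]
  | succ k ih =>
      rw [pow_succ, ih, ← Circle.exp_add]
      congr 1
      push_cast
      ring

/-- If a θ-twisted homomorphism `ψ : P → C(𝕋,𝕋)` has `ψ_n` constant for some `n ∈ P`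
with `n ≥ 2`, then `ψ_p` is constant for every `p ∈ P`. -/
theorem stmt13 (P : Submonoid ℕ) (ψ : ℕ → C(Circle, Circle))
    (htwist : ∀ p q : ℕ, p ∈ P → q ∈ P → ∀ z : Circle,
      ψ (p * q) z = ψ p z * ψ q (z ^ p))
    (n : ℕ) (hn : n ∈ P) (hn2 : 2 ≤ n)
    (hconst : ∃ c : Circle, ∀ z : Circle, ψ n z = c) :
    ∀ p : ℕ, p ∈ P → ∃ c : Circle, ∀ z : Circle, ψ p z = c := by
  intro p hp
  obtain ⟨c, hc⟩ := hconst
  -- ψ p (z ^ n) = ψ p z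
  have key : ∀ z : Circle, ψ p (z ^ n) = ψ p z := by
    intro z
    have h1 := htwist n p hn hp z
    have h2 := htwist p n hp hn z
    rw [mul_comm n p] at h1
    rw [h1, hc z, hc (z ^ p)] at h2
    have : c * ψ p (z ^ n) = c * ψ p z := by rw [h2, mul_comm]
    exact mul_left_cancel this
  refine ⟨ψ p 1, fun z => ?_⟩
  -- iterate: ψ p (exp (t / n^k)) = ψ p (exp t)
  have hiter : ∀ (t : ℝ) (k : ℕ), ψ p (Circle.exp (t / (n : ℝ) ^ k)) = ψ p (Circle.exp t) := by
    intro t k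
    induction k with
    | zero => simp
    | succ k ih =>
        have hne : (n : ℝ) ≠ 0 := by positivity
        have : (Circle.exp (t / (n : ℝ) ^ (k + 1))) ^ n = Circle.exp (t / (n : ℝ) ^ k) := by
          rw [circle_exp_pow]
          congr 1
          field_simp
          ring
        rw [← ih, ← this, key]
  set t := Complex.arg (z : ℂ) with ht
  have hz : Circle.exp t = z := Circle.exp_arg z
  -- the sequence exp (t / n^k) tends to 1
  have hlim : Filter.Tendsto (fun k : ℕ => Circle.exp (t / (n : ℝ) ^ k)) Filter.atTop
      (nhds 1) := by
    have h0 : Filter.Tendsto (fun k : ℕ => t / (n : ℝ) ^ k) Filter.atTop (nhds 0) := by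
      have : Filter.Tendsto (fun k : ℕ => t * (1 / (n : ℝ)) ^ k) Filter.atTop (nhds (t * 0)) := by
        apply Filter.Tendsto.const_mul
        apply tendsto_pow_atTop_nhds_zero_of_lt_one
        · positivity
        · rw [div_lt_one (by positivity)]
          exact_mod_cast lt_of_lt_of_le one_lt_two hn2
      simpa [div_pow, div_eq_mul_inv] using this
    have := (Circle.exp.continuous.tendsto 0).comp h0
    simpa [Circle.exp_zero, Function.comp_def] using this
  have hlim2 : Filter.Tendsto (fun k : ℕ => ψ p (Circle.exp (t / (n : ℝ) ^ k))) Filter.atTop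
      (nhds (ψ p 1)) := ((ψ p).continuous.tendsto 1).comp hlim
  have hconstseq : (fun k : ℕ => ψ p (Circle.exp (t / (n : ℝ) ^ k))) = fun _ => ψ p z := by
    funext k
    rw [hiter t k, hz]
  rw [hconstseq] at hlim2
  exact (tendsto_nhds_unique hlim2 tendsto_const_nhds).symm
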